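/- Let S ∈ (0,1) and A₄ = 3(1−S). Let B₁, B₂ ∈ ℝ with B₁ ≠ 0, set α₁ = −(A₄B₂/3)(B₁+B₂)² and α₀ = −α₁, and assume α₁ ≠ 0 and A₄B₁/(4α₁) > 0. Let γ ∈ ℝ satisfy γ² = A₄B₁/(4α₁), and set A₃ = −A₄(2B₁ + 3B₂ + 1), A₂ = A₄(B₁(2B₂+1) + 3B₂(B₂+1) + B₁(B₁+2B₂+1)), A₁ = 3α₁ − (A₂ + A₃ + A₄), A₀ = 3α₀. Then the function Z(r) = B₁·tanh²(γr) + B₂ satisfies, for all r ∈ ℝ: (α₁Z(r) + α₀)·(Z′(r))² = A₄Z(r)⁴ + A₃Z(r)³ + A₂Z(r)² + A₁Z(r) + A₀. -/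

import Mathlib

/-- The solitary-wave profile Z(r) = B₁·tanh²(γr) + B₂. -/
noncomputable def Zsn (B₁ B₂ γ : ℝ) : ℝ → ℝ := fun r => B₁ * (Real.tanh (γ * r)) ^ 2 + B₂

lemma hasDerivAt_tanh' (x : ℝ) : HasDerivAt Real.tanh (1 - Real.tanh x ^ 2) x := by
  have h := (Real.hasDerivAt_sinh x).div (Real.hasDerivAt_cosh x) (Real.cosh_pos x).ne'
  have heq : (Real.cosh x * Real.cosh x - Real.sinh x * Real.sinh x) / Real.cosh x ^ 2
      = 1 - Real.tanh x ^ 2 := by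
    rw [Real.tanh_eq_sinh_div_cosh]
    have h1 : Real.cosh x ^ 2 - Real.sinh x ^ 2 = 1 := Real.cosh_sq_sub_sinh_sq x
    field_simp
  have : Real.tanh = fun x => Real.sinh x / Real.cosh x := by
    funext y; exact Real.tanh_eq_sinh_div_cosh y
  rw [← heq, this]
  exact h

lemma Zsn_hasDerivAt (B₁ B₂ γ r : ℝ) :
    HasDerivAt (Zsn B₁ B₂ γ)
      (B₁ * (2 * Real.tanh (γ * r) * ((1 - Real.tanh (γ * r) ^ 2) * γ))) r := by
  have h1 : HasDerivAt (fun r : ℝ => γ * r) γ r := by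
    simpa using (hasDerivAt_id r).const_mul γ
  have h2 : HasDerivAt (fun r : ℝ => Real.tanh (γ * r))
      ((1 - Real.tanh (γ * r) ^ 2) * γ) r := (hasDerivAt_tanh' (γ * r)).comp r h1
  have h3 := ((h2.pow 2).const_mul B₁).add_const B₂
  refine h3.congr_deriv ?_
  norm_num

theorem stmt10 (S A₄ B₁ B₂ α₀ α₁ γ A₃ A₂ A₁ A₀ : ℝ)
    (hS : 0 < S) (hS1 : S < 1) (hA₄ : A₄ = 3 * (1 - S)) (hB₁ : B₁ ≠ 0)
    (hα₁ : α₁ = -(A₄ * B₂ / 3) * (B₁ + B₂) ^ 2) (hα₀ : α₀ = -α₁)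
    (hα₁0 : α₁ ≠ 0) (hpos : A₄ * B₁ / (4 * α₁) > 0)
    (hγ : γ ^ 2 = A₄ * B₁ / (4 * α₁))
    (hA₃ : A₃ = -A₄ * (2 * B₁ + 3 * B₂ + 1))
    (hA₂ : A₂ = A₄ * (B₁ * (2 * B₂ + 1) + 3 * B₂ * (B₂ + 1) + B₁ * (B₁ + 2 * B₂ + 1)))
    (hA₁ : A₁ = 3 * α₁ - (A₂ + A₃ + A₄)) (hA₀ : A₀ = 3 * α₀) :
    ∀ r : ℝ, (α₁ * Zsn B₁ B₂ γ r + α₀) * (deriv (Zsn B₁ B₂ γ) r) ^ 2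
      = A₄ * (Zsn B₁ B₂ γ r) ^ 4 + A₃ * (Zsn B₁ B₂ γ r) ^ 3
        + A₂ * (Zsn B₁ B₂ γ r) ^ 2 + A₁ * Zsn B₁ B₂ γ r + A₀ := by
  intro r
  have hd := (Zsn_hasDerivAt B₁ B₂ γ r).deriv
  rw [hd]
  set t := Real.tanh (γ * r) with ht
  have hγ' : 4 * α₁ * γ ^ 2 = A₄ * B₁ := by
    field_simp at hγ; linarith
  simp only [Zsn]
  rw [← ht]
  subst hα₀ hA₀ hA₁ hA₂ hA₃ hα₁
  linear_combination ((B₁ * t ^ 2 + B₂ - 1) * B₁ ^ 2 * t ^ 2 * (1 - t ^ 2) ^ 2) * hγ'
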